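/- Let S be a finite nonempty set, let (X, d) be a metric space, K ⊆ X a nonempty compact subset, λ ∈ [0, 1), and for each i ∈ S let f_i : X → X satisfy f_i(K) ⊆ K and d(f_i(a), f_i(b)) ≤ λ·d(a, b) for all a, b ∈ K. Then there exists exactly one function g : Σ_S → K satisfying the equivariance relation g(τξ) = f_{ξ_0}(g(ξ)) for all ξ ∈ Σ_S, and this function g is continuous (Σ_S carrying the product topology). (The graph of g is the attracting invariant section of the one-step skew-product generated by the family (f_i)_{i∈S}.) -/

import Mathlib

open Metric Set Filter Topology

/-- Backward iterated composition: apply `f (ξ (-1))` after shifting. -/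
def iterComp {S X : Type*} (f : S → X → X) (x₀ : X) : ℕ → (ℤ → S) → X
  | 0, _ => x₀
  | n + 1, ξ => f (ξ (-1)) (iterComp f x₀ n (fun i => ξ (i - 1)))

/-- **Attracting invariant section of a one-step skew-product.**
If each `f i` maps the nonempty compact set `K` into itself and is a `λ`-contraction on
`K` (`0 ≤ λ < 1`), then there is exactly one function `g : Σ_S → K` with
`g(τξ) = f_{ξ₀}(g(ξ))` for all bi-infinite sequences `ξ`, and this `g` is continuous. -/
theorem attracting_invariant_section
    {S : Type*} [Fintype S] [Nonempty S] [TopologicalSpace S] [DiscreteTopology S]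
    {X : Type*} [MetricSpace X] (K : Set X) (hK : K.Nonempty) (hKc : IsCompact K)
    (lam : ℝ) (hlam0 : 0 ≤ lam) (hlam1 : lam < 1)
    (f : S → X → X) (hmaps : ∀ i, MapsTo (f i) K K)
    (hlip : ∀ i, ∀ a ∈ K, ∀ b ∈ K, dist (f i a) (f i b) ≤ lam * dist a b) :
    ∃ g : (ℤ → S) → X,
      ((∀ ξ, g ξ ∈ K) ∧ ∀ ξ : ℤ → S, g (fun i => ξ (i + 1)) = f (ξ 0) (g ξ)) ∧
      Continuous g ∧
      ∀ g' : (ℤ → S) → X,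
        ((∀ ξ, g' ξ ∈ K) ∧ ∀ ξ : ℤ → S, g' (fun i => ξ (i + 1)) = f (ξ 0) (g' ξ)) →
        g' = g := by
  obtain ⟨x₀, hx₀⟩ := hK
  set D : ℝ := Metric.diam K with hD
  have hdistD : ∀ a ∈ K, ∀ b ∈ K, dist a b ≤ D :=
    fun a ha b hb => Metric.dist_le_diam_of_mem hKc.isBounded ha hb
  have hmem : ∀ n ξ, iterComp f x₀ n ξ ∈ K := by
    intro n
    induction n with
    | zero => intro ξ; exact hx₀
    | succ n ih => intro ξ; exact hmaps _ (ih _)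
  have hstep : ∀ n ξ, dist (iterComp f x₀ n ξ) (iterComp f x₀ (n + 1) ξ) ≤ D * lam ^ n := by
    intro n
    induction n with
    | zero =>
      intro ξ
      simpa [iterComp] using hdistD _ hx₀ _ (hmem 1 ξ)
    | succ n ih =>
      intro ξ
      calc dist (iterComp f x₀ (n + 1) ξ) (iterComp f x₀ (n + 2) ξ)
          ≤ lam * dist (iterComp f x₀ n (fun i => ξ (i - 1)))
              (iterComp f x₀ (n + 1) (fun i => ξ (i - 1))) :=
            hlip _ _ (hmem _ _) _ (hmem _ _)
        _ ≤ lam * (D * lam ^ n) := by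
            have := ih (fun i => ξ (i - 1))
            nlinarith
        _ = D * lam ^ (n + 1) := by ring
  have hcauchy : ∀ ξ, CauchySeq (fun n => iterComp f x₀ n ξ) := fun ξ =>
    cauchySeq_of_le_geometric lam D hlam1 (fun n => hstep n ξ)
  have hlim : ∀ ξ, ∃ x ∈ K, Tendsto (fun n => iterComp f x₀ n ξ) atTop (𝓝 x) := fun ξ =>
    cauchySeq_tendsto_of_isComplete hKc.isComplete (fun n => hmem n ξ) (hcauchy ξ)
  set g : (ℤ → S) → X := fun ξ => (hlim ξ).choose with hg
  have hgK : ∀ ξ, g ξ ∈ K := fun ξ => (hlim ξ).choose_spec.1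
  have hgt : ∀ ξ, Tendsto (fun n => iterComp f x₀ n ξ) atTop (𝓝 (g ξ)) :=
    fun ξ => (hlim ξ).choose_spec.2
  have hDlam : Tendsto (fun n : ℕ => D * lam ^ n) atTop (𝓝 0) := by
    simpa using (tendsto_pow_atTop_nhds_zero_of_lt_one hlam0 hlam1).const_mul D
  -- continuity of each f i restricted to K along sequences in K, used twice
  have hfcont : ∀ (i : S) (u : ℕ → X) (x : X), (∀ n, u n ∈ K) → x ∈ K →
      Tendsto u atTop (𝓝 x) → Tendsto (fun n => f i (u n)) atTop (𝓝 (f i x)) := by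
    intro i u x hu hx hux
    rw [tendsto_iff_dist_tendsto_zero]
    apply squeeze_zero (fun n => dist_nonneg) (fun n => hlip i _ (hu n) _ hx)
    have : Tendsto (fun n => dist (u n) x) atTop (𝓝 0) :=
      tendsto_iff_dist_tendsto_zero.1 hux
    simpa using this.const_mul lam
  -- equivariance
  have hequiv : ∀ ξ : ℤ → S, g (fun i => ξ (i + 1)) = f (ξ 0) (g ξ) := by
    intro ξ
    have h1 : Tendsto (fun n => iterComp f x₀ (n + 1) (fun i => ξ (i + 1))) atTop
        (𝓝 (g (fun i => ξ (i + 1)))) :=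
      (hgt (fun i => ξ (i + 1))).comp (tendsto_add_atTop_nat 1)
    have h2 : ∀ n, iterComp f x₀ (n + 1) (fun i => ξ (i + 1)) = f (ξ 0) (iterComp f x₀ n ξ) := by
      intro n
      show f (ξ (-1 + 1)) (iterComp f x₀ n (fun i => ξ (i - 1 + 1))) = _
      rw [show (fun i : ℤ => ξ (i - 1 + 1)) = ξ from funext fun i => by norm_num]
      norm_num
    have h3 : Tendsto (fun n => f (ξ 0) (iterComp f x₀ n ξ)) atTop (𝓝 (f (ξ 0) (g ξ))) :=
      hfcont _ _ _ (fun n => hmem n ξ) (hgK ξ) (hgt ξ)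
    exact tendsto_nhds_unique (by simpa only [h2] using h1) h3
  -- continuity estimate: sequences agreeing on [-n, 0) have close images
  have cb : ∀ (n : ℕ) (ξ η : ℤ → S), (∀ i : ℤ, -(n : ℤ) ≤ i → i < 0 → ξ i = η i) →
      dist (g ξ) (g η) ≤ D * lam ^ n := by
    intro n
    induction n with
    | zero => intro ξ η _; simpa using hdistD _ (hgK ξ) _ (hgK η)
    | succ n ih =>
      intro ξ η h
      have hrw : ∀ ζ : ℤ → S, g ζ = f (ζ (-1)) (g (fun i => ζ (i - 1))) := by
        intro ζ
        have h0 : (fun i : ℤ => ζ (i + 1 - 1)) = ζ := funext fun i => by norm_num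
        calc g ζ = g (fun i => ζ (i + 1 - 1)) := by rw [h0]
          _ = f (ζ (0 - 1)) (g (fun i => ζ (i - 1))) := hequiv (fun i => ζ (i - 1))
          _ = f (ζ (-1)) (g (fun i => ζ (i - 1))) := by norm_num
      rw [hrw ξ, hrw η, h (-1) (by push_cast; omega) (by omega)]
      have hih : dist (g (fun i => ξ (i - 1))) (g (fun i => η (i - 1))) ≤ D * lam ^ n := by
        apply ih
        intro i h1 h2
        exact h (i - 1) (by push_cast; omega) (by omega)
      calc dist (f (η (-1)) (g (fun i => ξ (i - 1)))) (f (η (-1)) (g (fun i => η (i - 1))))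
          ≤ lam * dist (g (fun i => ξ (i - 1))) (g (fun i => η (i - 1))) :=
            hlip _ _ (hgK _) _ (hgK _)
        _ ≤ lam * (D * lam ^ n) := by nlinarith
        _ = D * lam ^ (n + 1) := by ring
  -- continuity
  have hcont : Continuous g := by
    rw [continuous_iff_continuousAt]
    intro ξ
    rw [ContinuousAt, Metric.tendsto_nhds]
    intro ε hε
    obtain ⟨n, hn⟩ := (hDlam.eventually (gt_mem_nhds hε)).exists
    have hev : ∀ i : ℤ, ∀ᶠ η in 𝓝 ξ, η i = ξ i := by
      intro i
      have hc : Tendsto (fun η : ℤ → S => η i) (𝓝 ξ) (𝓝 (ξ i)) :=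
        (continuous_apply i).continuousAt
      have hmemn : {s : S | s = ξ i} ∈ 𝓝 (ξ i) := by
        rw [nhds_discrete]; exact Filter.mem_pure.2 rfl
      exact hc hmemn
    have hall : ∀ᶠ η in 𝓝 ξ, ∀ i ∈ Finset.Icc (-(n : ℤ)) (-1), η i = ξ i :=
      (Finset.Icc (-(n : ℤ)) (-1)).eventually_all.2 fun i _ => hev i
    filter_upwards [hall] with η hη
    have : dist (g η) (g ξ) ≤ D * lam ^ n := by
      apply cb
      intro i h1 h2
      exact hη i (Finset.mem_Icc.2 ⟨h1, by omega⟩)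
    exact lt_of_le_of_lt this hn
  refine ⟨g, ⟨hgK, hequiv⟩, hcont, ?_⟩
  -- uniqueness
  intro g' ⟨hg'K, hg'eq⟩
  funext ξ
  have bound : ∀ n (ζ : ℤ → S), dist (g' ζ) (g ζ) ≤ D * lam ^ n := by
    intro n
    induction n with
    | zero => intro ζ; simpa using hdistD _ (hg'K ζ) _ (hgK ζ)
    | succ n ih =>
      intro ζ
      have hrw : ∀ (h : (ℤ → S) → X), (∀ η, h (fun i => η (i + 1)) = f (η 0) (h η)) →
          h ζ = f (ζ (-1)) (h (fun i => ζ (i - 1))) := by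
        intro h hh
        have h0 : (fun i : ℤ => ζ (i + 1 - 1)) = ζ := funext fun i => by norm_num
        calc h ζ = h (fun i => ζ (i + 1 - 1)) := by rw [h0]
          _ = f (ζ (0 - 1)) (h (fun i => ζ (i - 1))) := hh (fun i => ζ (i - 1))
          _ = f (ζ (-1)) (h (fun i => ζ (i - 1))) := by norm_num
      rw [hrw g' hg'eq, hrw g hequiv]
      have := ih (fun i => ζ (i - 1))
      calc dist (f (ζ (-1)) (g' (fun i => ζ (i - 1)))) (f (ζ (-1)) (g (fun i => ζ (i - 1))))
          ≤ lam * dist (g' (fun i => ζ (i - 1))) (g (fun i => ζ (i - 1))) :=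
            hlip _ _ (hg'K _) _ (hgK _)
        _ ≤ lam * (D * lam ^ n) := by nlinarith
        _ = D * lam ^ (n + 1) := by ring
  have : dist (g' ξ) (g ξ) ≤ 0 :=
    ge_of_tendsto hDlam (Filter.Eventually.of_forall fun n => bound n ξ)
  exact dist_le_zero.1 this
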